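/- Let X be a complex Banach space, η ∈ (0,1), and let L = P + N be a (1,η)-gap decomposition of a bounded linear operator L on X. Then for every radius r ∈ (0, 1−η), every point of the circle |z − 1| = r lies in the resolvent set of L, and (2πi)⁻¹ ∮_{|z−1|=r} (z·I − L)⁻¹ dz = P. -/

import Mathlib

open ContinuousLinearMap Metric

/-- if `L = P + N` is a `(1,η)`-gap decomposition of a bounded operator `L`
on a complex Banach space, then for every radius `r ∈ (0, 1-η)` the circle `|z-1| = r`
lies in the resolvent set of `L` and `(2πi)⁻¹ ∮_{|z-1|=r} (zI - L)⁻¹ dz = P`. -/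
theorem stmt3 {X : Type*} [NormedAddCommGroup X] [NormedSpace ℂ X] [CompleteSpace X]
    (η : ℝ) (hη : η ∈ Set.Ioo (0 : ℝ) 1) (L P N : X →L[ℂ] X)
    (hPP : P * P = P) (hLP : L * P = P) (hPL : P * L = P)
    (hPN : P * N = 0) (hNP : N * P = 0) (hLPN : L = P + N)
    (hr : spectralRadius ℂ N ≤ ENNReal.ofReal η) :
    ∀ r ∈ Set.Ioo (0 : ℝ) (1 - η),
      (∀ z : ℂ, ‖z - 1‖ = r → z ∈ resolventSet ℂ L) ∧
      (2 * Real.pi * Complex.I : ℂ)⁻¹ •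
          (∮ z in C(1, r), Ring.inverse (algebraMap ℂ (X →L[ℂ] X) z - L)) = P := by
  intro r hrI
  obtain ⟨hr0, hr1⟩ := hrI
  set Q : X →L[ℂ] X := 1 - P with hQdef
  have hPQ : P * Q = 0 := by rw [hQdef, mul_sub, mul_one, hPP, sub_self]
  have hQP : Q * P = 0 := by rw [hQdef, sub_mul, one_mul, hPP, sub_self]
  have hQQ : Q * Q = Q := by rw [hQdef, mul_sub, mul_one, hQP, sub_zero]
  -- every point of the closed ball is in the resolvent set of N
  have hρN : ∀ z : ℂ, ‖z - 1‖ ≤ r → z ∈ resolventSet ℂ N := by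
    intro z hz
    apply spectrum.mem_resolventSet_of_spectralRadius_lt
    refine lt_of_le_of_lt hr ?_
    rw [← ENNReal.ofReal_coe_nnreal, coe_nnnorm]
    have hz1 : (1 : ℝ) - r ≤ ‖z‖ := by
      have h := norm_sub_norm_le (1 : ℂ) z
      rw [norm_one, norm_sub_rev] at h
      linarith
    have hηz : η < ‖z‖ := by linarith
    exact (ENNReal.ofReal_lt_ofReal_iff (lt_trans hη.1 hηz)).2 hηz
  -- key algebraic facts
  have hcomm : ∀ z : ℂ, (algebraMap ℂ (X →L[ℂ] X) z - N) * P
      = P * (algebraMap ℂ (X →L[ℂ] X) z - N) := by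
    intro z
    rw [sub_mul, mul_sub, hNP, hPN, Algebra.commutes]
  have hcommQ : ∀ z : ℂ, (algebraMap ℂ (X →L[ℂ] X) z - N) * Q
      = Q * (algebraMap ℂ (X →L[ℂ] X) z - N) := by
    intro z
    rw [hQdef, mul_sub (algebraMap ℂ (X →L[ℂ] X) z - N) 1 P,
      sub_mul 1 P (algebraMap ℂ (X →L[ℂ] X) z - N), mul_one, one_mul, hcomm z]
  -- the explicit inverse and the unit
  have hunit : ∀ z : ℂ, ‖z - 1‖ ≤ r → z ≠ 1 →
      (algebraMap ℂ (X →L[ℂ] X) z - L) *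
        ((z - 1)⁻¹ • P + Ring.inverse (algebraMap ℂ (X →L[ℂ] X) z - N) * Q) = 1 ∧
      ((z - 1)⁻¹ • P + Ring.inverse (algebraMap ℂ (X →L[ℂ] X) z - N) * Q) *
        (algebraMap ℂ (X →L[ℂ] X) z - L) = 1 := by
    intro z hz hz1
    set B : X →L[ℂ] X := algebraMap ℂ (X →L[ℂ] X) z - N with hBdef
    set B' : X →L[ℂ] X := Ring.inverse B with hB'def
    have hBu : IsUnit B := hρN z hz
    have hBB' : B * B' = 1 := Ring.mul_inverse_cancel B hBu
    have hB'B : B' * B = 1 := Ring.inverse_mul_cancel B hBu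
    have hB'P : B' * P = P * B' := by
      calc B' * P = B' * (P * (B * B')) := by rw [hBB', mul_one]
        _ = B' * (P * B) * B' := by noncomm_ring
        _ = B' * (B * P) * B' := by rw [← hcomm]
        _ = (B' * B) * (P * B') := by noncomm_ring
        _ = P * B' := by rw [hB'B, one_mul]
    have hB'Q : B' * Q = Q * B' := by
      rw [hQdef, mul_sub B' 1 P, sub_mul 1 P B', mul_one, one_mul, hB'P]
    have hzz : (z - 1) ≠ 0 := sub_ne_zero.2 hz1
    have hdecomp : algebraMap ℂ (X →L[ℂ] X) z - L = (z - 1) • P + B * Q := by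
      rw [hLPN, hBdef, hQdef, Algebra.algebraMap_eq_smul_one, mul_sub, mul_one, sub_mul,
        smul_mul_assoc, one_mul, hNP, sub_smul, one_smul]
      abel
    constructor
    · rw [hdecomp, add_mul, mul_add, mul_add]
      have t11 : ((z - 1) • P) * ((z - 1)⁻¹ • P) = P := by
        rw [smul_mul_assoc, mul_smul_comm, smul_smul, mul_inv_cancel₀ hzz, one_smul, hPP]
      have t12 : ((z - 1) • P) * (B' * Q) = 0 := by
        rw [smul_mul_assoc, ← mul_assoc, ← hB'P, mul_assoc, hPQ, mul_zero, smul_zero]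
      have t21 : (B * Q) * ((z - 1)⁻¹ • P) = 0 := by
        rw [mul_smul_comm, mul_assoc, hQP, mul_zero, smul_zero]
      have t22 : (B * Q) * (B' * Q) = Q := by
        calc (B * Q) * (B' * Q) = B * (Q * B') * Q := by noncomm_ring
          _ = B * (B' * Q) * Q := by rw [hB'Q]
          _ = (B * B') * (Q * Q) := by noncomm_ring
          _ = Q := by rw [hBB', hQQ, one_mul]
      rw [t11, t12, t21, t22, add_zero, zero_add, hQdef]
      abel
    · rw [hdecomp, mul_add, add_mul, add_mul]
      have t11 : ((z - 1)⁻¹ • P) * ((z - 1) • P) = P := by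
        rw [smul_mul_assoc, mul_smul_comm, smul_smul, inv_mul_cancel₀ hzz, one_smul, hPP]
      have t12 : ((z - 1)⁻¹ • P) * (B * Q) = 0 := by
        rw [smul_mul_assoc, ← mul_assoc, ← hcomm, mul_assoc, hPQ, mul_zero, smul_zero]
      have t21 : (B' * Q) * ((z - 1) • P) = 0 := by
        rw [mul_smul_comm, mul_assoc, hQP, mul_zero, smul_zero]
      have t22 : (B' * Q) * (B * Q) = Q := by
        calc (B' * Q) * (B * Q) = B' * (Q * B) * Q := by noncomm_ring
          _ = B' * (B * Q) * Q := by rw [hcommQ]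
          _ = (B' * B) * (Q * Q) := by noncomm_ring
          _ = Q := by rw [hB'B, hQQ, one_mul]
      rw [t11, t12, t21, t22, add_zero, zero_add, hQdef]
      abel
  -- resolvent set of L
  have hρL : ∀ z : ℂ, ‖z - 1‖ ≤ r → z ≠ 1 → z ∈ resolventSet ℂ L := by
    intro z hz hz1
    obtain ⟨h1, h2⟩ := hunit z hz hz1
    exact ⟨⟨algebraMap ℂ (X →L[ℂ] X) z - L, _, h1, h2⟩, rfl⟩
  have hne1 : ∀ z : ℂ, ‖z - 1‖ = r → z ≠ 1 := by
    intro z hz h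
    rw [h, sub_self, norm_zero] at hz
    exact hr0.ne hz
  have hsphere : ∀ z : ℂ, ‖z - 1‖ = r → z ∈ resolventSet ℂ L := fun z hz =>
    hρL z (le_of_eq hz) (hne1 z hz)
  refine ⟨hsphere, ?_⟩
  -- identify the integrand on the sphere
  have hinv : ∀ z : ℂ, ‖z - 1‖ = r →
      Ring.inverse (algebraMap ℂ (X →L[ℂ] X) z - L)
        = (z - 1)⁻¹ • P + Ring.inverse (algebraMap ℂ (X →L[ℂ] X) z - N) * Q := by
    intro z hz
    obtain ⟨h1, h2⟩ := hunit z (le_of_eq hz) (hne1 z hz)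
    have h : Ring.inverse (algebraMap ℂ (X →L[ℂ] X) z - L)
        = Ring.inverse ((⟨algebraMap ℂ (X →L[ℂ] X) z - L, _, h1, h2⟩ : (X →L[ℂ] X)ˣ)
            : X →L[ℂ] X) := rfl
    rw [h, Ring.inverse_unit]
    rfl
  have hEq : Set.EqOn (fun z => Ring.inverse (algebraMap ℂ (X →L[ℂ] X) z - L))
      (fun z => (z - 1)⁻¹ • P + Ring.inverse (algebraMap ℂ (X →L[ℂ] X) z - N) * Q)
      (sphere (1 : ℂ) r) := by
    intro z hz
    exact hinv z (mem_sphere_iff_norm.mp hz)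
  rw [circleIntegral.integral_congr hr0.le hEq]
  -- integrability of the two pieces
  have hcont2 : ContinuousOn (fun z => Ring.inverse (algebraMap ℂ (X →L[ℂ] X) z - N) * Q)
      (closedBall (1 : ℂ) r) := by
    intro z hz
    have hzρ : z ∈ resolventSet ℂ N := hρN z (mem_closedBall_iff_norm.mp hz)
    have hd : DifferentiableAt ℂ
        (fun w => Ring.inverse (algebraMap ℂ (X →L[ℂ] X) w - N) * Q) z :=
      ((spectrum.hasDerivAt_resolvent (𝕜 := ℂ) (a := N) hzρ).differentiableAt).mul
        (differentiableAt_const Q)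
    exact hd.continuousAt.continuousWithinAt
  have hint1 : CircleIntegrable (fun z : ℂ => (z - 1)⁻¹ • P) 1 r := by
    apply ContinuousOn.circleIntegrable hr0.le
    intro z hz
    have hz1 : z ≠ 1 := hne1 z (mem_sphere_iff_norm.mp hz)
    exact (((continuousAt_id.sub continuousAt_const).inv₀
      (sub_ne_zero.2 hz1)).smul continuousAt_const).continuousWithinAt
  have hint2 : CircleIntegrable
      (fun z : ℂ => Ring.inverse (algebraMap ℂ (X →L[ℂ] X) z - N) * Q) 1 r :=
    ContinuousOn.circleIntegrable hr0.le (hcont2.mono sphere_subset_closedBall)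
  have hadd : (∮ z in C(1, r), ((z - 1)⁻¹ • P
        + Ring.inverse (algebraMap ℂ (X →L[ℂ] X) z - N) * Q))
      = (∮ z in C(1, r), (z - 1)⁻¹ • P)
        + (∮ z in C(1, r), Ring.inverse (algebraMap ℂ (X →L[ℂ] X) z - N) * Q) := by
    simp only [circleIntegral, smul_add, intervalIntegral.integral_add hint1.out hint2.out]
  rw [hadd]
  -- the holomorphic piece integrates to zero
  have hzero : (∮ z in C(1, r), Ring.inverse (algebraMap ℂ (X →L[ℂ] X) z - N) * Q) = 0 := by
    apply Complex.circleIntegral_eq_zero_of_differentiable_on_off_countable hr0.le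
      Set.countable_empty hcont2
    intro z hz
    have hzρ : z ∈ resolventSet ℂ N := hρN z (le_of_lt (mem_ball_iff_norm.mp hz.1))
    exact ((spectrum.hasDerivAt_resolvent (𝕜 := ℂ) (a := N) hzρ).differentiableAt).mul
      (differentiableAt_const Q)
  rw [hzero, add_zero]
  have hP : (∮ z in C(1, r), (z - 1)⁻¹ • P) = (2 * Real.pi * Complex.I : ℂ) • P := by
    rw [circleIntegral.integral_smul_const,
      circleIntegral.integral_sub_inv_of_mem_ball (mem_ball_self hr0)]
  rw [hP, smul_smul, inv_mul_cancel₀ (by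
    simp [Real.pi_ne_zero, Complex.ext_iff, Real.pi_pos.ne']), one_smul]
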